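/- arXiv:1303.2988 — 2 statements merged into one kernel-verified Lean document; each statement's English description precedes it below -/
import Mathlib

section
/- Let U : (0,∞) → ℝ be C¹ with U′(r) > 0 for all r > 0, lim_{r→0⁺} U(r) = U₀ ∈ ℝ, lim_{r→∞} U(r) = U_∞ ∈ (U₀, +∞], and suppose r ↦ r³U′(r) is strictly increasing with lim_{r→0⁺} r³U′(r) = 0 and lim_{r→∞} r³U′(r) = ∞. Fix E with U₀ < E < U_∞ and suppose r* > 0 is the unique solution of E − U(r) − (r/2)U′(r) = 0; set L_max = √(r*³ U′(r*)). Then: (i) for every L with 0 < L < L_max, the equation E − U(r) − L²/(2r²) = 0 has exactly two roots 0 < r₁(E,L) < r₂(E,L) < ∞; (ii) for L = L_max it has exactly one root, namely r = r*; (iii) for L > L_max it has no root. -/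
open MeasureTheory Real Set Filter

noncomputable section

/-- **Turning points of the radial motion.**  Let `U` be a `C¹` increasing spherically
symmetric potential on `(0,∞)` with limits `U₀` at `0⁺` and `U_∞ ∈ (U₀, +∞]` at `∞`, such
that `r ↦ r³U′(r)` is strictly increasing from `0` to `∞`.  Fix `U₀ < E < U_∞` and let
`r* > 0` be the unique solution of `E − U(r) − (r/2)U′(r) = 0`, and set
`L_max = √(r*³U′(r*))`.  Then for `0 < L < L_max` the equation `E − U(r) − L²/(2r²) = 0`
has exactly two roots `0 < r₁ < r₂ < ∞`; for `L = L_max` it has exactly one root, namely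
`r = r*`; and for `L > L_max` it has no root. -/
theorem turning_points
    (U : ℝ → ℝ) (hU : ContDiffOn ℝ 1 U (Ioi 0))
    (hU' : ∀ r : ℝ, 0 < r → 0 < deriv U r)
    (U₀ : ℝ) (hU₀ : Tendsto U (nhdsWithin 0 (Ioi 0)) (nhds U₀))
    (Uinf : EReal) (hUinf : Tendsto (fun r : ℝ => (U r : EReal)) atTop (nhds Uinf))
    (hU₀inf : (U₀ : EReal) < Uinf)
    (hmono : StrictMonoOn (fun r : ℝ => r ^ 3 * deriv U r) (Ioi 0))
    (hmono0 : Tendsto (fun r : ℝ => r ^ 3 * deriv U r) (nhdsWithin 0 (Ioi 0)) (nhds 0))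
    (hmonoInf : Tendsto (fun r : ℝ => r ^ 3 * deriv U r) atTop atTop)
    (E : ℝ) (hE₀ : U₀ < E) (hEinf : (E : EReal) < Uinf)
    (rs : ℝ) (hrs : 0 < rs)
    (hrsroot : E - U rs - rs / 2 * deriv U rs = 0)
    (hrsuniq : ∀ r : ℝ, 0 < r → E - U r - r / 2 * deriv U r = 0 → r = rs)
    (Lmax : ℝ) (hLmax : Lmax = Real.sqrt (rs ^ 3 * deriv U rs)) :
    (∀ L : ℝ, 0 < L → L < Lmax →
      ∃ r₁ r₂ : ℝ, 0 < r₁ ∧ r₁ < r₂ ∧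
        E - U r₁ - L ^ 2 / (2 * r₁ ^ 2) = 0 ∧ E - U r₂ - L ^ 2 / (2 * r₂ ^ 2) = 0 ∧
        ∀ r : ℝ, 0 < r → E - U r - L ^ 2 / (2 * r ^ 2) = 0 → r = r₁ ∨ r = r₂) ∧
    (∀ r : ℝ, 0 < r → (E - U r - Lmax ^ 2 / (2 * r ^ 2) = 0 ↔ r = rs)) ∧
    (∀ L : ℝ, Lmax < L → ∀ r : ℝ, 0 < r → E - U r - L ^ 2 / (2 * r ^ 2) ≠ 0) := by
  -- basic facts about Lmax
  have hFrs : 0 < rs ^ 3 * deriv U rs := mul_pos (pow_pos hrs 3) (hU' rs hrs)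
  have hLmaxsq : Lmax ^ 2 = rs ^ 3 * deriv U rs := by
    rw [hLmax, sq_sqrt hFrs.le]
  have hLmaxpos : 0 < Lmax := by rw [hLmax]; exact Real.sqrt_pos.mpr hFrs
  set g : ℝ → ℝ → ℝ := fun L r => E - U r - L ^ 2 / (2 * r ^ 2) with hg
  have hUdiff : ∀ r : ℝ, 0 < r → HasDerivAt U (deriv U r) r := fun r hr =>
    ((hU.differentiableOn one_ne_zero).differentiableAt (isOpen_Ioi.mem_nhds hr)).hasDerivAt
  have hderivcont : ContinuousOn (deriv U) (Ioi 0) :=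
    hU.continuousOn_deriv_of_isOpen isOpen_Ioi le_rfl
  have hFcont : ContinuousOn (fun r : ℝ => r ^ 3 * deriv U r) (Ioi 0) :=
    ((continuous_pow 3).continuousOn).mul hderivcont
  have hgcont : ∀ L : ℝ, ContinuousOn (g L) (Ioi 0) := by
    intro L
    apply (continuousOn_const.sub hU.continuousOn).sub
    exact continuousOn_const.div ((continuous_const.mul (continuous_pow 2)).continuousOn)
      (fun r hr => by have : (0:ℝ) < r := hr; positivity)
  have hgderiv : ∀ (L r : ℝ), 0 < r → HasDerivAt (g L) (L ^ 2 / r ^ 3 - deriv U r) r := by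
    intro L r hr
    have h2 : HasDerivAt (fun x : ℝ => L ^ 2 / (2 * x ^ 2))
        ((0 * (2 * r ^ 2) - L ^ 2 * (2 * (2 * r))) / (2 * r ^ 2) ^ 2) r := by
      refine (hasDerivAt_const r (L ^ 2)).div ?_ (by positivity)
      have := (hasDerivAt_pow 2 r).const_mul (2:ℝ)
      simpa using this
    have h3 := ((hasDerivAt_const r E).sub (hUdiff r hr)).sub h2
    refine h3.congr_deriv ?_
    field_simp
    ring
  -- monotonicity structure of g L
  have hkey : ∀ L c : ℝ, 0 < c → c ^ 3 * deriv U c = L ^ 2 →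
      StrictMonoOn (g L) (Ioc 0 c) ∧ StrictAntiOn (g L) (Ici c) := by
    intro L c hc hcL
    constructor
    · apply strictMonoOn_of_deriv_pos (convex_Ioc 0 c)
        ((hgcont L).mono (fun x hx => hx.1))
      intro x hx
      rw [interior_Ioc] at hx
      have hx0 : 0 < x := hx.1
      rw [(hgderiv L x hx0).deriv]
      have hlt : x ^ 3 * deriv U x < L ^ 2 := by
        rw [← hcL]; exact hmono (mem_Ioi.mpr hx0) (mem_Ioi.mpr hc) hx.2
      have : deriv U x < L ^ 2 / x ^ 3 := by
        rw [lt_div_iff₀ (pow_pos hx0 3)]; linarith [hlt, mul_comm (deriv U x) (x ^ 3)]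
      linarith
    · apply strictAntiOn_of_deriv_neg (convex_Ici c)
        ((hgcont L).mono (fun x hx => lt_of_lt_of_le hc hx))
      intro x hx
      rw [interior_Ici] at hx
      have hx0 : 0 < x := hc.trans hx
      rw [(hgderiv L x hx0).deriv]
      have hlt : L ^ 2 < x ^ 3 * deriv U x := by
        rw [← hcL]; exact hmono (mem_Ioi.mpr hc) (mem_Ioi.mpr hx0) hx
      have : L ^ 2 / x ^ 3 < deriv U x := by
        rw [div_lt_iff₀ (pow_pos hx0 3)]; linarith [mul_comm (deriv U x) (x ^ 3)]
      linarith
  have hgrs0 : g Lmax rs = 0 := by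
    simp only [hg]
    have h1 : Lmax ^ 2 / (2 * rs ^ 2) = rs / 2 * deriv U rs := by
      rw [hLmaxsq]; field_simp
    linarith [hrsroot, h1]
  obtain ⟨hmRS, haRS⟩ := hkey Lmax rs hrs hLmaxsq.symm
  have hgle : ∀ r : ℝ, 0 < r → r ≠ rs → g Lmax r < 0 := by
    intro r hr hne
    rcases hne.lt_or_gt with h | h
    · have := hmRS ⟨hr, h.le⟩ ⟨hrs, le_rfl⟩ h
      linarith [hgrs0]
    · have := haRS (mem_Ici.mpr le_rfl) (mem_Ici.mpr h.le) h
      linarith [hgrs0]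
  refine ⟨?_, ?_, ?_⟩
  · -- 0 < L < Lmax : two roots
    intro L hL hLlt
    have hL2lt : L ^ 2 < Lmax ^ 2 := by nlinarith
    -- find c with c^3 U'(c) = L^2, 0 < c < rs
    have hev1 : ∀ᶠ x in nhdsWithin 0 (Ioi 0), x ^ 3 * deriv U x < L ^ 2 :=
      hmono0.eventually_lt_const (by positivity)
    have hev2 : Ioo (0:ℝ) rs ∈ nhdsWithin 0 (Ioi 0) :=
      Ioo_mem_nhdsGT_of_mem ⟨le_rfl, hrs⟩
    obtain ⟨a0, ha0F, ha0mem⟩ := (hev1.and (eventually_of_mem hev2 fun x h => h)).exists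
    have ha0pos : 0 < a0 := ha0mem.1
    have hivF := intermediate_value_Ioo ha0mem.2.le
      (hFcont.mono (fun x hx => lt_of_lt_of_le ha0pos hx.1))
    have hmemF : L ^ 2 ∈ Ioo (a0 ^ 3 * deriv U a0) (rs ^ 3 * deriv U rs) :=
      ⟨ha0F, hLmaxsq ▸ hL2lt⟩
    obtain ⟨c, hcmem, hcF⟩ := hivF hmemF
    have hc0 : 0 < c := ha0pos.trans hcmem.1
    have hcrs : c < rs := hcmem.2
    obtain ⟨hm, ha⟩ := hkey L c hc0 hcF
    have hgLrs : 0 < g L rs := by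
      simp only [hg]
      have hlt : L ^ 2 / (2 * rs ^ 2) < Lmax ^ 2 / (2 * rs ^ 2) := by
        gcongr
      simp only [hg] at hgrs0
      linarith
    have hgLc : 0 < g L c := hgLrs.trans (ha (mem_Ici.mpr le_rfl) (mem_Ici.mpr hcrs.le) hcrs)
    -- a point a ∈ (0, c) with g L a < 0
    have hUev : ∀ᶠ x in nhdsWithin 0 (Ioi 0), U₀ - 1 < U x :=
      hU₀.eventually_const_lt (by linarith)
    have hinv : Tendsto (fun x : ℝ => L ^ 2 / (2 * x ^ 2)) (nhdsWithin 0 (Ioi 0)) atTop := by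
      have hsq : Tendsto (fun x : ℝ => 2 * x ^ 2) (nhdsWithin 0 (Ioi 0))
          (nhdsWithin 0 (Ioi 0)) := by
        rw [tendsto_nhdsWithin_iff]
        constructor
        · have : Tendsto (fun x : ℝ => 2 * x ^ 2) (nhds 0) (nhds 0) := by
            have hc : Continuous (fun x : ℝ => 2 * x ^ 2) :=
              continuous_const.mul (continuous_pow 2)
            simpa using hc.tendsto (0:ℝ)
          exact this.mono_left nhdsWithin_le_nhds
        · exact eventually_mem_nhdsWithin.mono fun x hx => by
            have : (0:ℝ) < x := hx
            exact mem_Ioi.mpr (by positivity)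
      have := (tendsto_inv_nhdsGT_zero.comp hsq).const_mul_atTop (r := L ^ 2) (by positivity)
      refine this.congr fun x => ?_
      simp [div_eq_mul_inv, Function.comp]
    have hbigev : ∀ᶠ x in nhdsWithin 0 (Ioi 0), E - U₀ + 1 < L ^ 2 / (2 * x ^ 2) :=
      hinv.eventually_gt_atTop _
    have hevc : Ioo (0:ℝ) c ∈ nhdsWithin 0 (Ioi 0) :=
      Ioo_mem_nhdsGT_of_mem ⟨le_rfl, hc0⟩
    obtain ⟨a, ⟨hUa, hbiga⟩, hamem⟩ :=
      ((hUev.and hbigev).and (eventually_of_mem hevc fun x h => h)).exists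
    have hapos : 0 < a := hamem.1
    have hga : g L a < 0 := by simp only [hg]; linarith
    -- a point b > rs with g L b < 0
    have hEUb : ∀ᶠ x in atTop, (E : EReal) < (U x : EReal) :=
      hUinf.eventually_const_lt hEinf
    obtain ⟨b, hEb, hrsb⟩ := (hEUb.and (eventually_gt_atTop rs)).exists
    have hEb' : E < U b := by exact_mod_cast hEb
    have hbpos : 0 < b := hrs.trans hrsb
    have hgb : g L b < 0 := by
      simp only [hg]
      have : 0 < L ^ 2 / (2 * b ^ 2) := by positivity
      linarith
    -- first root in (a, c)
    have hac : a < c := hamem.2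
    have hiv1 := intermediate_value_Ioo hac.le
      ((hgcont L).mono (fun x hx => lt_of_lt_of_le hapos hx.1))
    obtain ⟨r₁, hr₁mem, hr₁⟩ := hiv1 ⟨hga, hgLc⟩
    -- second root in (rs, b)
    have hiv2 := intermediate_value_Ioo' hrsb.le
      ((hgcont L).mono (fun x hx => lt_of_lt_of_le hrs hx.1))
    obtain ⟨r₂, hr₂mem, hr₂⟩ := hiv2 ⟨hgb, hgLrs⟩
    have hr₁pos : 0 < r₁ := hapos.trans hr₁mem.1
    have hr₁c : r₁ < c := hr₁mem.2
    have hr₂rs : rs < r₂ := hr₂mem.1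
    refine ⟨r₁, r₂, hr₁pos, by linarith, hr₁, hr₂, ?_⟩
    intro r hr hroot
    have hroot' : g L r = 0 := hroot
    rcases le_or_gt r c with h | h
    · left
      exact hm.injOn ⟨hr, h⟩ ⟨hr₁pos, hr₁c.le⟩ (by rw [hroot', hr₁])
    · right
      exact ha.injOn (mem_Ici.mpr h.le) (mem_Ici.mpr (by linarith))
        (by rw [hroot', hr₂])
  · -- L = Lmax : unique root rs
    intro r hr
    constructor
    · intro h
      by_contra hne
      exact absurd h (hgle r hr hne).ne
    · intro h; subst h
      simpa [hg] using hgrs0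
  · -- L > Lmax : no roots
    intro L hLlt r hr
    have hL2 : Lmax ^ 2 < L ^ 2 := by nlinarith
    have h1 : g Lmax r ≤ 0 := by
      rcases eq_or_ne r rs with h | h
      · subst h; exact hgrs0.le
      · exact (hgle r hr h).le
    have h2 : Lmax ^ 2 / (2 * r ^ 2) < L ^ 2 / (2 * r ^ 2) := by
      gcongr
    simp only [hg] at h1
    intro hcon
    linarith
end
end

section
/- Let U : (0,∞) → ℝ be C² with U′ > 0 and r ↦ r³U′(r) strictly increasing, fix E, and suppose r* > 0 solves E − U(r) − (r/2)U′(r) = 0; set L_max = √(r*³U′(r*)) and assume φ_eff″(r*; L_max) > 0, where φ_eff(r; L) = U(r) + L²/(2r²). For 0 < L < L_max let r₁(E,L) < r₂(E,L) be the two roots of E − U(r) − L²/(2r²) = 0 and T(E,L) = ∫_{r₁(E,L)}^{r₂(E,L)} dr/√(2(E − U(r) − L²/(2r²))). Then lim_{L→L_max⁻} T(E,L) = π/√(φ_eff″(r*; L_max)). -/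
open MeasureTheory Real Set Filter

noncomputable section

open intervalIntegral


lemma aux_meas (a b : ℝ) : Measurable fun r : ℝ => 1 / Real.sqrt ((b - r) * (r - a)) := by
  apply Measurable.div measurable_const
  exact Real.continuous_sqrt.measurable.comp
    ((measurable_const.sub measurable_id).mul (measurable_id.sub measurable_const))

lemma rpow_half_inv {y : ℝ} (hy : 0 ≤ y) : y ^ (-(1:ℝ)/2) = (Real.sqrt y)⁻¹ := by
  rw [Real.sqrt_eq_rpow, ← Real.rpow_neg hy]
  norm_num

lemma intable_half {a b : ℝ} (hab : a < b) :
    IntervalIntegrable (fun r : ℝ => 1 / Real.sqrt ((b - r) * (r - a))) volume a ((a+b)/2) := by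
  have h2 : (0:ℝ) < (b - a)/2 := by linarith
  have hg : IntervalIntegrable (fun r : ℝ => (Real.sqrt ((b-a)/2))⁻¹ * (r - a) ^ (-(1:ℝ)/2))
      volume a ((a+b)/2) := by
    have h0 : IntervalIntegrable (fun x : ℝ => x ^ (-(1:ℝ)/2)) volume 0 ((a+b)/2 - a) :=
      intervalIntegrable_rpow' (by norm_num)
    have h1 := (h0.comp_sub_right a)
    simp only [zero_add] at h1
    have heq : (a+b)/2 - a + a = (a+b)/2 := by ring
    rw [heq] at h1
    exact h1.const_mul _
  refine hg.mono_fun' ((aux_meas a b).aestronglyMeasurable) ?_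
  rw [Filter.EventuallyLE, ae_restrict_iff' measurableSet_uIoc]
  refine Eventually.of_forall fun x hx => ?_
  rw [uIoc_of_le (by linarith)] at hx
  obtain ⟨hx1, hx2⟩ := hx
  have hxa : 0 < x - a := by linarith
  have hprod : ((b-a)/2) * (x - a) ≤ (b - x) * (x - a) := by nlinarith
  have hppos : 0 < ((b-a)/2) * (x - a) := by positivity
  have hs : Real.sqrt (((b-a)/2) * (x-a)) ≤ Real.sqrt ((b-x)*(x-a)) := Real.sqrt_le_sqrt hprod
  have hspos : 0 < Real.sqrt (((b-a)/2) * (x-a)) := Real.sqrt_pos.2 hppos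
  have hle : 1 / Real.sqrt ((b-x)*(x-a)) ≤ 1 / Real.sqrt (((b-a)/2)*(x-a)) :=
    one_div_le_one_div_of_le hspos hs
  have heq : (Real.sqrt ((b-a)/2))⁻¹ * (x - a) ^ (-(1:ℝ)/2) = 1 / Real.sqrt (((b-a)/2)*(x-a)) := by
    rw [rpow_half_inv hxa.le, Real.sqrt_mul h2.le, one_div, mul_inv]
  have hnn : 0 ≤ 1 / Real.sqrt ((b-x)*(x-a)) := by positivity
  simp only [Real.norm_eq_abs, abs_of_nonneg hnn]
  rw [heq]
  exact hle

lemma intable_inv_sqrt_prod {a b : ℝ} (hab : a < b) :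
    IntervalIntegrable (fun r : ℝ => 1 / Real.sqrt ((b - r) * (r - a))) volume a b := by
  have h1 := intable_half hab
  have h2 := (intable_half hab).comp_sub_left (a + b)
  have h2' : IntervalIntegrable (fun r : ℝ => 1 / Real.sqrt ((b - r) * (r - a))) volume
      ((a+b)/2) b := by
    have he : (fun x : ℝ => 1 / Real.sqrt ((b - (a + b - x)) * ((a + b - x) - a)))
        = fun r : ℝ => 1 / Real.sqrt ((b - r) * (r - a)) := by
      funext x; ring_nf
    rw [he] at h2
    have ha' : a + b - a = b := by ring
    have hm' : a + b - (a+b)/2 = (a+b)/2 := by ring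
    rw [ha', hm'] at h2
    exact h2.symm
  exact h1.trans h2'

lemma integral_inv_sqrt_prod {a b : ℝ} (hab : a < b) :
    ∫ r in a..b, 1 / Real.sqrt ((b - r) * (r - a)) = π := by
  have hba : (0:ℝ) < b - a := by linarith
  set F : ℝ → ℝ := fun r => Real.arcsin ((2*r - (a+b))/(b-a)) with hF
  have hderiv : ∀ x ∈ Ioo a b, HasDerivAt F (1 / Real.sqrt ((b - x) * (x - a))) x := by
    intro x hx
    obtain ⟨hx1, hx2⟩ := hx
    have hu : HasDerivAt (fun r : ℝ => (2*r - (a+b))/(b-a)) (2/(b-a)) x := by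
      have h0 : HasDerivAt (fun r : ℝ => 2*r - (a+b)) 2 x := by
        simpa using ((hasDerivAt_id x).const_mul 2).sub_const (a+b)
      exact h0.div_const (b-a)
    set u : ℝ := (2*x - (a+b))/(b-a) with hu'
    have hun : -1 < u := by rw [hu', lt_div_iff₀ hba]; linarith
    have hup : u < 1 := by rw [hu', div_lt_iff₀ hba]; linarith
    have harc := Real.hasDerivAt_arcsin (ne_of_gt hun) (ne_of_lt hup)
    have hcomp := harc.comp x hu
    have hprodpos : 0 < (b - x) * (x - a) := by nlinarith
    have hsq : Real.sqrt (1 - u^2) = 2 * Real.sqrt ((b-x)*(x-a)) / (b-a) := by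
      have h1 : 1 - u^2 = 4 * ((b-x)*(x-a)) / (b-a)^2 := by
        rw [hu']; field_simp; ring
      rw [h1, Real.sqrt_div (by positivity), Real.sqrt_sq hba.le,
        show (4:ℝ) * ((b-x)*(x-a)) = 2^2 * ((b-x)*(x-a)) by norm_num,
        Real.sqrt_mul (by positivity), Real.sqrt_sq (by norm_num)]
    have key : 1 / Real.sqrt (1 - u^2) * (2/(b-a)) = 1 / Real.sqrt ((b-x)*(x-a)) := by
      rw [hsq]
      have h2 : Real.sqrt ((b-x)*(x-a)) ≠ 0 := by positivity
      field_simp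
    rw [← key]
    exact hcomp
  have hcont : ContinuousOn F (Icc a b) :=
    (Real.continuous_arcsin.comp (by continuity)).continuousOn
  have hint := intable_inv_sqrt_prod hab
  rw [intervalIntegral.integral_eq_sub_of_hasDerivAt_of_le hab.le hcont hderiv hint]
  have h1 : (2*b - (a+b))/(b-a) = 1 := by field_simp; ring
  have h2 : (2*a - (a+b))/(b-a) = -1 := by field_simp; ring
  rw [hF]
  simp only [h1, h2, Real.arcsin_one, Real.arcsin_neg_one]
  ring

lemma fun_eq_const_mul (a b A : ℝ) (hA : 0 ≤ A) :
    (fun r : ℝ => 1 / Real.sqrt (A * ((b - r) * (r - a))))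
      = fun r : ℝ => (Real.sqrt A)⁻¹ * (1 / Real.sqrt ((b - r) * (r - a))) := by
  funext r
  rw [Real.sqrt_mul hA, one_div, mul_inv, one_div]

lemma intable_inv_sqrt_const_mul {a b A : ℝ} (hab : a < b) (hA : 0 ≤ A) :
    IntervalIntegrable (fun r : ℝ => 1 / Real.sqrt (A * ((b - r) * (r - a)))) volume a b := by
  rw [fun_eq_const_mul a b A hA]
  exact (intable_inv_sqrt_prod hab).const_mul _

lemma integral_inv_sqrt_const_mul {a b A : ℝ} (hab : a < b) (hA : 0 ≤ A) :
    ∫ r in a..b, 1 / Real.sqrt (A * ((b - r) * (r - a))) = π / Real.sqrt A := by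
  rw [fun_eq_const_mul a b A hA, intervalIntegral.integral_const_mul,
    integral_inv_sqrt_prod hab, mul_comm, ← div_eq_mul_inv]

lemma nonneg_of_concave_ends {f f' f'' : ℝ → ℝ} {a b : ℝ} (hab : a < b)
    (hc : ContinuousOn f (Icc a b))
    (h1 : ∀ x ∈ Ioo a b, HasDerivAt f (f' x) x)
    (h2 : ∀ x ∈ Ioo a b, HasDerivAt f' (f'' x) x)
    (h0 : ∀ x ∈ Ioo a b, f'' x ≤ 0)
    (ha : f a = 0) (hb : f b = 0) :
    ∀ x ∈ Icc a b, 0 ≤ f x := by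
  have hconc : ConcaveOn ℝ (Icc a b) f := by
    apply concaveOn_of_hasDerivWithinAt2_nonpos (convex_Icc a b) hc (f' := f') (f'' := f'')
    · intro x hx; rw [interior_Icc] at hx; exact (h1 x hx).hasDerivWithinAt
    · intro x hx; rw [interior_Icc] at hx; exact (h2 x hx).hasDerivWithinAt
    · intro x hx; rw [interior_Icc] at hx; exact h0 x hx
  intro x hx
  obtain ⟨hx1, hx2⟩ := hx
  have hba : (0:ℝ) < b - a := by linarith
  set t : ℝ := (b - x)/(b - a) with htd
  set s : ℝ := (x - a)/(b - a) with hsd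
  have ht : 0 ≤ t := div_nonneg (by linarith) hba.le
  have hs : 0 ≤ s := div_nonneg (by linarith) hba.le
  have hts : t + s = 1 := by rw [htd, hsd, ← add_div]; field_simp; ring
  have hcomb : t • a + s • b = x := by
    simp only [smul_eq_mul, htd, hsd]; field_simp; ring
  have := hconc.2 (left_mem_Icc.2 hab.le) (right_mem_Icc.2 hab.le) ht hs hts
  rw [hcomb] at this
  simpa [ha, hb] using this

lemma period_bounds
    (U : ℝ → ℝ) (E L a b Bm Bp : ℝ)
    (hfc : ContinuousOn (fun x : ℝ => E - U x - L^2/(2*x^2)) (Ioi 0))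
    (hfd : ∀ r : ℝ, 0 < r →
      HasDerivAt (fun x : ℝ => E - U x - L^2/(2*x^2)) (L^2/r^3 - deriv U r) r)
    (hfd2 : ∀ r : ℝ, 0 < r →
      HasDerivAt (fun x : ℝ => L^2/x^3 - deriv U x) (-(deriv (deriv U) r + 3*L^2/r^4)) r)
    (hapos : 0 < a) (hab : a < b)
    (hBm : 0 < Bm) (hBp : 0 < Bp)
    (hclo : ∀ x ∈ Ioo a b, Bm ≤ deriv (deriv U) x + 3*L^2/x^4)
    (hchi : ∀ x ∈ Ioo a b, deriv (deriv U) x + 3*L^2/x^4 ≤ Bp)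
    (hea : E - U a - L^2/(2*a^2) = 0) (heb : E - U b - L^2/(2*b^2) = 0) :
    π / Real.sqrt Bp ≤ (∫ r in a..b, 1 / Real.sqrt (2 * (E - U r - L^2/(2*r^2)))) ∧
    (∫ r in a..b, 1 / Real.sqrt (2 * (E - U r - L^2/(2*r^2)))) ≤ π / Real.sqrt Bm := by
  have hIccpos : Icc a b ⊆ Ioi 0 := fun x hx => lt_of_lt_of_le hapos hx.1
  have hIoopos : ∀ x ∈ Ioo a b, (0:ℝ) < x := fun x hx => lt_trans hapos hx.1
  -- derivative of the quadratic
  have hq : ∀ x : ℝ, HasDerivAt (fun y : ℝ => (b-y)*(y-a)) (a + b - 2*x) x := by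
    intro x
    have h := ((hasDerivAt_const x b).sub (hasDerivAt_id x)).mul
      ((hasDerivAt_id x).sub_const a)
    exact h.congr_deriv (by simp only [id_eq, Pi.sub_apply]; ring)
  have hqc : ∀ A : ℝ, Continuous (fun y : ℝ => A * ((b-y)*(y-a))) := by
    intro A; fun_prop
  -- lower bound on f
  have hlow : ∀ x ∈ Icc a b, Bm/2 * ((b-x)*(x-a)) ≤ E - U x - L^2/(2*x^2) := by
    have key := nonneg_of_concave_ends (f := fun x => (E - U x - L^2/(2*x^2)) - Bm/2*((b-x)*(x-a)))
      (f' := fun x => (L^2/x^3 - deriv U x) - Bm/2*(a + b - 2*x))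
      (f'' := fun x => -(deriv (deriv U) x + 3*L^2/x^4) + Bm)
      hab
      (((hfc.mono hIccpos)).sub ((hqc (Bm/2)).continuousOn))
      (fun x hx => ((hfd x (hIoopos x hx)).sub ((hq x).const_mul (Bm/2))))
      (fun x hx => by
        have hlin : HasDerivAt (fun y : ℝ => a + b - 2*y) (-2) x := by
          exact ((hasDerivAt_const x (a+b)).sub ((hasDerivAt_id x).const_mul 2)).congr_deriv (by norm_num)
        have h := (hfd2 x (hIoopos x hx)).sub (hlin.const_mul (Bm/2))
        exact h.congr_deriv (by ring))
      (fun x hx => by have := hclo x hx; linarith)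
      (by simp only [sub_self, mul_zero, zero_mul, sub_zero]; exact hea)
      (by simp only [sub_self, mul_zero, zero_mul, sub_zero]; exact heb)
    intro x hx
    have := key x hx
    linarith
  -- upper bound on f
  have hupp : ∀ x ∈ Icc a b, E - U x - L^2/(2*x^2) ≤ Bp/2 * ((b-x)*(x-a)) := by
    have key := nonneg_of_concave_ends (f := fun x => Bp/2*((b-x)*(x-a)) - (E - U x - L^2/(2*x^2)))
      (f' := fun x => Bp/2*(a + b - 2*x) - (L^2/x^3 - deriv U x))
      (f'' := fun x => (deriv (deriv U) x + 3*L^2/x^4) - Bp)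
      hab
      (((hqc (Bp/2)).continuousOn).sub (hfc.mono hIccpos))
      (fun x hx => (((hq x).const_mul (Bp/2)).sub (hfd x (hIoopos x hx))))
      (fun x hx => by
        have hlin : HasDerivAt (fun y : ℝ => a + b - 2*y) (-2) x := by
          exact ((hasDerivAt_const x (a+b)).sub ((hasDerivAt_id x).const_mul 2)).congr_deriv (by norm_num)
        have h := (hlin.const_mul (Bp/2)).sub (hfd2 x (hIoopos x hx))
        exact h.congr_deriv (by ring))
      (fun x hx => by have := hchi x hx; linarith)
      (by simp only [sub_self, mul_zero, zero_mul, zero_sub, neg_eq_zero]; exact hea)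
      (by simp only [sub_self, mul_zero, zero_mul, zero_sub, neg_eq_zero]; exact heb)
    intro x hx
    have := key x hx
    linarith
  -- pointwise bounds on the integrand
  have hptlo : ∀ x ∈ Icc a b,
      1 / Real.sqrt (Bp * ((b-x)*(x-a))) ≤ 1 / Real.sqrt (2 * (E - U x - L^2/(2*x^2))) := by
    intro x hx
    have hpnn : 0 ≤ (b-x)*(x-a) := mul_nonneg (by linarith [hx.2]) (by linarith [hx.1])
    have hfnn : 0 ≤ E - U x - L^2/(2*x^2) := le_trans (by positivity) (hlow x hx)
    rcases eq_or_lt_of_le hfnn with hf0 | hfpos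
    · have hp0 : (b-x)*(x-a) = 0 := by
        have := hlow x hx
        nlinarith
      rw [← hf0, hp0]
      simp
    · apply one_div_le_one_div_of_le (by positivity)
      apply Real.sqrt_le_sqrt
      have := hupp x hx
      linarith
  have hpthi : ∀ x ∈ Icc a b,
      1 / Real.sqrt (2 * (E - U x - L^2/(2*x^2))) ≤ 1 / Real.sqrt (Bm * ((b-x)*(x-a))) := by
    intro x hx
    have hpnn : 0 ≤ (b-x)*(x-a) := mul_nonneg (by linarith [hx.2]) (by linarith [hx.1])
    rcases eq_or_lt_of_le hpnn with hp0 | hppos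
    · have hf0 : E - U x - L^2/(2*x^2) = 0 := by
        have h1 := hlow x hx
        have h2 := hupp x hx
        rw [← hp0] at h1 h2
        nlinarith
      rw [hf0, ← hp0]
      simp
    · apply one_div_le_one_div_of_le (by positivity)
      apply Real.sqrt_le_sqrt
      have := hlow x hx
      linarith
  -- integrability of the integrand
  have hmeas : AEStronglyMeasurable (fun r : ℝ => 1 / Real.sqrt (2 * (E - U r - L^2/(2*r^2))))
      (volume.restrict (Set.uIoc a b)) := by
    rw [uIoc_of_le hab.le]
    have h1 : AEMeasurable (fun x : ℝ => E - U x - L^2/(2*x^2)) (volume.restrict (Ioc a b)) :=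
      ((hfc.mono (fun x hx => lt_of_lt_of_le hapos hx.1.le)).aemeasurable measurableSet_Ioc)
    have h2 : Measurable (fun y : ℝ => 1 / Real.sqrt (2*y)) :=
      measurable_const.div (Real.continuous_sqrt.measurable.comp
        (measurable_const.mul measurable_id))
    exact (h2.comp_aemeasurable h1).aestronglyMeasurable
  have hint : IntervalIntegrable (fun r : ℝ => 1 / Real.sqrt (2 * (E - U r - L^2/(2*r^2))))
      volume a b := by
    apply (intable_inv_sqrt_const_mul hab hBm.le).mono_fun' hmeas
    rw [Filter.EventuallyLE, ae_restrict_iff' measurableSet_uIoc]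
    refine Eventually.of_forall fun x hx => ?_
    rw [uIoc_of_le hab.le] at hx
    have hx' : x ∈ Icc a b := ⟨hx.1.le, hx.2⟩
    have hnn : 0 ≤ 1 / Real.sqrt (2 * (E - U x - L^2/(2*x^2))) := by positivity
    simp only [Real.norm_eq_abs, abs_of_nonneg hnn]
    exact hpthi x hx'
  constructor
  · have h := intervalIntegral.integral_mono_on hab.le
      (intable_inv_sqrt_const_mul hab hBp.le) hint hptlo
    rwa [integral_inv_sqrt_const_mul hab hBp.le] at h
  · have h := intervalIntegral.integral_mono_on hab.le
      hint (intable_inv_sqrt_const_mul hab hBm.le) hpthi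
    rwa [integral_inv_sqrt_const_mul hab hBm.le] at h


set_option maxHeartbeats 2000000 in
/-- **Limit of the radial period integral as `L → L_max⁻`.**  Let `U` be a `C²` increasing
spherically symmetric potential with `r ↦ r³U′(r)` strictly increasing, let `r* > 0` solve
`E − U(r) − (r/2)U′(r) = 0`, set `L_max = √(r*³U′(r*))`, and assume the effective potential
curvature `φ_eff″(r*; L_max) = U″(r*) + 3L_max²/r*⁴` is positive.  With `r₁(E,L) < r₂(E,L)`
the two turning points for `0 < L < L_max`, the radial period integral
`T(E,L) = ∫_{r₁}^{r₂} dr/√(2(E − U(r) − L²/(2r²)))` converges, as `L → L_max⁻`, to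
`π/√(φ_eff″(r*; L_max))`. -/
theorem radial_period_limit_L_to_Lmax
    (U : ℝ → ℝ) (hU : ContDiffOn ℝ 2 U (Ioi 0))
    (hU' : ∀ r : ℝ, 0 < r → 0 < deriv U r)
    (hmono : StrictMonoOn (fun r : ℝ => r ^ 3 * deriv U r) (Ioi 0))
    (E : ℝ) (rs : ℝ) (hrs : 0 < rs)
    (hrsroot : E - U rs - rs / 2 * deriv U rs = 0)
    (Lmax : ℝ) (hLmax : Lmax = Real.sqrt (rs ^ 3 * deriv U rs))
    (hcurv : 0 < deriv (deriv U) rs + 3 * Lmax ^ 2 / rs ^ 4)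
    (r1 r2 : ℝ → ℝ)
    (hroots : ∀ L : ℝ, 0 < L → L < Lmax →
      0 < r1 L ∧ r1 L < r2 L ∧
      E - U (r1 L) - L ^ 2 / (2 * (r1 L) ^ 2) = 0 ∧
      E - U (r2 L) - L ^ 2 / (2 * (r2 L) ^ 2) = 0 ∧
      ∀ r : ℝ, 0 < r → E - U r - L ^ 2 / (2 * r ^ 2) = 0 → r = r1 L ∨ r = r2 L) :
    Tendsto
      (fun L : ℝ =>
        ∫ r in (r1 L)..(r2 L), 1 / Real.sqrt (2 * (E - U r - L ^ 2 / (2 * r ^ 2))))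
      (nhdsWithin Lmax (Iio Lmax))
      (nhds (π / Real.sqrt (deriv (deriv U) rs + 3 * Lmax ^ 2 / rs ^ 4))) := by
    -- basic regularity facts
  have hUc : ContinuousOn U (Ioi 0) := hU.continuousOn
  have hdU : ∀ r : ℝ, 0 < r → HasDerivAt U (deriv U r) r := fun r hr =>
    ((hU.differentiableOn (by norm_num)).differentiableAt (Ioi_mem_nhds hr)).hasDerivAt
  have hU1 : ContDiffOn ℝ 1 (deriv U) (Ioi 0) := hU.deriv_of_isOpen isOpen_Ioi (by norm_num)
  have hdU2 : ∀ r : ℝ, 0 < r → HasDerivAt (deriv U) (deriv (deriv U) r) r := fun r hr =>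
    ((hU1.differentiableOn (by norm_num)).differentiableAt (Ioi_mem_nhds hr)).hasDerivAt
  have hcU2 : ContinuousOn (deriv (deriv U)) (Ioi 0) :=
    hU1.continuousOn_deriv_of_isOpen isOpen_Ioi (by norm_num)
  have hfd : ∀ (L r : ℝ), 0 < r →
      HasDerivAt (fun x : ℝ => E - U x - L^2/(2*x^2)) (L^2/r^3 - deriv U r) r := by
    intro L r hr
    have hg : HasDerivAt (fun x : ℝ => 2*x^2) (2*(2*r^1)) r :=
      (hasDerivAt_pow 2 r).const_mul 2
    have hq := (hasDerivAt_const r (L^2)).div hg (by positivity)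
    have h0 := ((hasDerivAt_const r E).sub (hdU r hr)).sub hq
    exact h0.congr_deriv (by field_simp; ring)
  have hfd2 : ∀ (L r : ℝ), 0 < r →
      HasDerivAt (fun x : ℝ => L^2/x^3 - deriv U x)
        (-(deriv (deriv U) r + 3*L^2/r^4)) r := by
    intro L r hr
    have hg : HasDerivAt (fun x : ℝ => x^3) (3*r^2) r := by
      simpa using hasDerivAt_pow 3 r
    have hq := (hasDerivAt_const r (L^2)).div hg (by positivity)
    have h0 := hq.sub (hdU2 r hr)
    exact h0.congr_deriv (by field_simp; ring)
  have hfc : ∀ L : ℝ, ContinuousOn (fun x : ℝ => E - U x - L^2/(2*x^2)) (Ioi 0) := by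
    intro L
    apply (continuousOn_const.sub hUc).sub
    exact continuousOn_const.div (by fun_prop) (fun x hx => by
      have : (0:ℝ) < x := hx
      positivity)
  -- basic quantities
  have hLm0 : 0 < rs^3 * deriv U rs := by
    have := hU' rs hrs; positivity
  have hLm2 : Lmax^2 = rs^3 * deriv U rs := by
    rw [hLmax, Real.sq_sqrt hLm0.le]
  have hLmpos : 0 < Lmax := hLmax ▸ Real.sqrt_pos.2 hLm0
  have frs0 : E - U rs - Lmax^2/(2*rs^2) = 0 := by
    rw [hLm2]
    have h1 : rs^3 * deriv U rs / (2*rs^2) = rs/2 * deriv U rs := by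
      field_simp
    rw [h1]; linarith
  -- unimodality via MVT
  have hunim : ∀ L : ℝ, 0 < L → ∀ p q w : ℝ, 0 < p → p < q → q < w →
      (E - U q - L^2/(2*q^2)) < (E - U p - L^2/(2*p^2)) →
      (E - U q - L^2/(2*q^2)) < (E - U w - L^2/(2*w^2)) → False := by
    intro L hL p q w hp hpq hqw h1 h2
    have hq : (0:ℝ) < q := lt_trans hp hpq
    obtain ⟨η, hη, hηeq⟩ := exists_hasDerivAt_eq_slope
      (fun x : ℝ => E - U x - L^2/(2*x^2)) (fun x : ℝ => L^2/x^3 - deriv U x) hpq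
      ((hfc L).mono (fun x hx => lt_of_lt_of_le hp hx.1))
      (fun x hx => hfd L x (lt_trans hp hx.1))
    obtain ⟨ξ, hξ, hξeq⟩ := exists_hasDerivAt_eq_slope
      (fun x : ℝ => E - U x - L^2/(2*x^2)) (fun x : ℝ => L^2/x^3 - deriv U x) hqw
      ((hfc L).mono (fun x hx => lt_of_lt_of_le hq hx.1))
      (fun x hx => hfd L x (lt_trans hq hx.1))
    have hηpos : 0 < η := lt_trans hp hη.1
    have hξpos : 0 < ξ := lt_trans hq hξ.1
    have hηneg : L^2/η^3 - deriv U η < 0 := by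
      rw [hηeq]
      apply div_neg_of_neg_of_pos (by linarith) (by linarith)
    have hξposv : 0 < L^2/ξ^3 - deriv U ξ := by
      rw [hξeq]
      apply div_pos (by linarith) (by linarith)
    have hη3 : L^2 < η^3 * deriv U η := by
      have h3 : L^2/η^3 < deriv U η := by linarith
      calc L^2 = (L^2/η^3) * η^3 := by field_simp
      _ < deriv U η * η^3 := by
          apply mul_lt_mul_of_pos_right h3 (by positivity)
      _ = η^3 * deriv U η := by ring
    have hξ3 : ξ^3 * deriv U ξ < L^2 := by
      have h3 : deriv U ξ < L^2/ξ^3 := by linarith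
      calc ξ^3 * deriv U ξ = deriv U ξ * ξ^3 := by ring
      _ < (L^2/ξ^3) * ξ^3 := mul_lt_mul_of_pos_right h3 (by positivity)
      _ = L^2 := by field_simp
    have := hmono (mem_Ioi.2 hηpos) (mem_Ioi.2 hξpos) (lt_trans hη.2 hξ.1)
    simp only at this
    linarith
  -- f L rs > 0 for 0 ≤ L < Lmax
  have fpos : ∀ L : ℝ, 0 ≤ L → L < Lmax → 0 < E - U rs - L^2/(2*rs^2) := by
    intro L hL0 hL
    have h1 : L^2 < Lmax^2 := by nlinarith
    have h2 : L^2/(2*rs^2) < Lmax^2/(2*rs^2) :=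
      div_lt_div_of_pos_right h1 (by positivity)
    linarith
  -- f Lmax is negative at rs ± δ
  have fneg : ∀ δ : ℝ, 0 < δ → δ < rs →
      (E - U (rs+δ) - Lmax^2/(2*(rs+δ)^2) < 0) ∧
      (E - U (rs-δ) - Lmax^2/(2*(rs-δ)^2) < 0) := by
    intro δ hδ hδrs
    constructor
    · obtain ⟨ξ, hξ, hξeq⟩ := exists_hasDerivAt_eq_slope
        (fun x : ℝ => E - U x - Lmax^2/(2*x^2)) (fun x : ℝ => Lmax^2/x^3 - deriv U x)
        (by linarith : rs < rs + δ)
        ((hfc Lmax).mono (fun x hx => lt_of_lt_of_le hrs hx.1))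
        (fun x hx => hfd Lmax x (lt_trans hrs hx.1))
      have hξpos : 0 < ξ := lt_trans hrs hξ.1
      have hmm := hmono (mem_Ioi.2 hrs) (mem_Ioi.2 hξpos) hξ.1
      simp only at hmm
      have hd : Lmax^2/ξ^3 - deriv U ξ < 0 := by
        rw [← hLm2] at hmm
        have : Lmax^2/ξ^3 < deriv U ξ := by
          rw [div_lt_iff₀ (by positivity)]
          nlinarith
        linarith
      rw [hξeq] at hd
      have h5 : E - U (rs + δ) - Lmax ^ 2 / (2 * (rs + δ) ^ 2) -
          (E - U rs - Lmax ^ 2 / (2 * rs ^ 2)) < 0 := by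
        have hpos : (0:ℝ) < rs + δ - rs := by linarith
        have := mul_neg_of_neg_of_pos hd hpos
        rw [div_mul_cancel₀] at this
        · linarith
        · linarith
      rw [frs0] at h5
      linarith
    · obtain ⟨ξ, hξ, hξeq⟩ := exists_hasDerivAt_eq_slope
        (fun x : ℝ => E - U x - Lmax^2/(2*x^2)) (fun x : ℝ => Lmax^2/x^3 - deriv U x)
        (by linarith : rs - δ < rs)
        ((hfc Lmax).mono (fun x hx => lt_of_lt_of_le (by linarith) hx.1))
        (fun x hx => hfd Lmax x (lt_trans (by linarith) hx.1))
      have hξpos : 0 < ξ := lt_trans (by linarith) hξ.1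
      have hmm := hmono (mem_Ioi.2 hξpos) (mem_Ioi.2 hrs) hξ.2
      simp only at hmm
      have hd : 0 < Lmax^2/ξ^3 - deriv U ξ := by
        rw [← hLm2] at hmm
        have : deriv U ξ < Lmax^2/ξ^3 := by
          rw [lt_div_iff₀ (by positivity)]
          nlinarith
        linarith
      rw [hξeq] at hd
      have h5 : 0 < E - U rs - Lmax ^ 2 / (2 * rs ^ 2) -
          (E - U (rs - δ) - Lmax ^ 2 / (2 * (rs - δ) ^ 2)) := by
        have hpos : (0:ℝ) < rs - (rs - δ) := by linarith
        have := mul_pos hd hpos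
        rw [div_mul_cancel₀] at this
        · linarith
        · linarith
      rw [frs0] at h5
      linarith
  -- eventual localization of the turning points
  have hev : ∀ δ : ℝ, 0 < δ → δ < rs →
      ∀ᶠ L in nhdsWithin Lmax (Iio Lmax),
        0 < L ∧ L < Lmax ∧ rs - δ < r1 L ∧ r2 L < rs + δ := by
    intro δ hδ hδrs
    have hmem : Ioo 0 Lmax ∈ nhdsWithin Lmax (Iio Lmax) :=
      Ioo_mem_nhdsLT_of_mem (right_mem_Ioc.2 hLmpos)
    have hcL : ∀ x : ℝ, Continuous (fun L : ℝ => E - U x - L^2/(2*x^2)) := by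
      intro x
      apply continuous_const.sub
      exact (continuous_pow 2).div_const _
    have htp : ∀ᶠ L in nhdsWithin Lmax (Iio Lmax), E - U (rs+δ) - L^2/(2*(rs+δ)^2) < 0 :=
      (((hcL (rs+δ)).tendsto Lmax).mono_left nhdsWithin_le_nhds).eventually
        (eventually_lt_nhds (fneg δ hδ hδrs).1)
    have htm : ∀ᶠ L in nhdsWithin Lmax (Iio Lmax), E - U (rs-δ) - L^2/(2*(rs-δ)^2) < 0 :=
      (((hcL (rs-δ)).tendsto Lmax).mono_left nhdsWithin_le_nhds).eventually
        (eventually_lt_nhds (fneg δ hδ hδrs).2)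
    filter_upwards [hmem, htp, htm] with L hL hp hm
    obtain ⟨hL0, hLlt⟩ := hL
    obtain ⟨h1pos, h12, he1, he2, _⟩ := hroots L hL0 hLlt
    have hfrs : 0 < E - U rs - L^2/(2*rs^2) := fpos L hL0.le hLlt
    refine ⟨hL0, hLlt, ?_, ?_⟩
    · by_contra hcon
      push_neg at hcon
      rcases eq_or_lt_of_le hcon with heq | hlt
      · rw [← heq] at hm; linarith
      · exact hunim L hL0 (r1 L) (rs - δ) rs h1pos hlt (by linarith)
          (by linarith) (by linarith)
    · by_contra hcon
      push_neg at hcon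
      rcases eq_or_lt_of_le hcon with heq | hlt
      · rw [heq] at hp; linarith
      · exact hunim L hL0 rs (rs + δ) (r2 L) hrs (by linarith) hlt
          (by linarith) (by linarith)
  -- curvature control near rs
  set K := deriv (deriv U) rs + 3*Lmax^2/rs^4 with hKdef
  have hKpos : 0 < K := hcurv
  have hKc : ContinuousAt (fun r : ℝ => deriv (deriv U) r + 3*Lmax^2/r^4) rs := by
    have h1 : ContinuousAt (deriv (deriv U)) rs := hcU2.continuousAt (Ioi_mem_nhds hrs)
    have h2 : ContinuousAt (fun r : ℝ => 3*Lmax^2/r^4) rs :=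
      ContinuousAt.div continuousAt_const (by fun_prop) (by positivity)
    exact h1.add h2
  have hKval : (fun r : ℝ => deriv (deriv U) r + 3*Lmax^2/r^4) rs = K := by rw [hKdef]
  clear_value K
  have hδex : ∀ ε : ℝ, 0 < ε → ∃ δ : ℝ, 0 < δ ∧ δ < rs ∧
      ∀ᶠ L in nhdsWithin Lmax (Iio Lmax),
        ∀ x ∈ Icc (rs-δ) (rs+δ),
          K - ε < deriv (deriv U) x + 3*L^2/x^4 ∧
          deriv (deriv U) x + 3*L^2/x^4 < K + ε := by
    intro ε hε
    obtain ⟨δ₀, hδ₀, hball⟩ := Metric.continuousAt_iff.1 hKc (ε/2) (by linarith)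
    refine ⟨min (δ₀/2) (rs/2), by positivity,
      lt_of_le_of_lt (min_le_right _ _) (by linarith), ?_⟩
    set δ := min (δ₀/2) (rs/2) with hδdef
    have hδrs2 : δ ≤ rs/2 := min_le_right _ _
    have hδ0 : δ ≤ δ₀/2 := min_le_left _ _
    have hmem : Ioo 0 Lmax ∈ nhdsWithin Lmax (Iio Lmax) :=
      Ioo_mem_nhdsLT_of_mem (right_mem_Ioc.2 hLmpos)
    have hgap : Tendsto (fun L : ℝ => 3*(Lmax^2 - L^2)/(rs/2)^4)
        (nhdsWithin Lmax (Iio Lmax)) (nhds 0) := by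
      have hc : Continuous (fun L : ℝ => 3*(Lmax^2 - L^2)/(rs/2)^4) := by
        apply Continuous.div_const
        exact continuous_const.mul (continuous_const.sub (continuous_pow 2))
      have := (hc.tendsto Lmax).mono_left (nhdsWithin_le_nhds (s := Iio Lmax))
      simpa using this
    have hgapev : ∀ᶠ L in nhdsWithin Lmax (Iio Lmax), 3*(Lmax^2 - L^2)/(rs/2)^4 < ε/2 :=
      hgap.eventually (eventually_lt_nhds (by linarith))
    filter_upwards [hmem, hgapev] with L hL hgapL
    intro x hx
    have hxrs : rs/2 ≤ x := by
      have h' : rs - rs/2 ≤ x := by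
        calc rs - rs/2 ≤ rs - δ := by linarith
        _ ≤ x := hx.1
      linarith
    have hxpos : 0 < x := by linarith
    have hdist : |x - rs| < δ₀ := by
      rw [abs_sub_lt_iff]
      constructor
      · have := hx.2; linarith [lt_of_le_of_lt hδ0 (by linarith : δ₀/2 < δ₀)]
      · have := hx.1; linarith [lt_of_le_of_lt hδ0 (by linarith : δ₀/2 < δ₀)]
    have hKx : |deriv (deriv U) x + 3*Lmax^2/x^4 - K| < ε/2 := by
      have hb := hball (show dist x rs < δ₀ by rwa [Real.dist_eq])
      rw [Real.dist_eq] at hb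
      rw [← hKval]
      exact hb
    rw [abs_sub_lt_iff] at hKx
    have hL2 : L^2 ≤ Lmax^2 := by nlinarith [hL.1, hL.2]
    have hsplit : deriv (deriv U) x + 3*L^2/x^4
        = (deriv (deriv U) x + 3*Lmax^2/x^4) - 3*(Lmax^2 - L^2)/x^4 := by
      field_simp
      ring
    have hgapx : 3*(Lmax^2 - L^2)/x^4 ≤ 3*(Lmax^2 - L^2)/(rs/2)^4 := by
      have h4 : (rs/2)^4 ≤ x^4 := by gcongr
      gcongr
    have hgapnn : 0 ≤ 3*(Lmax^2 - L^2)/x^4 :=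
      div_nonneg (by linarith) (by positivity)
    constructor
    · rw [hsplit]
      have : 3*(Lmax^2 - L^2)/x^4 < ε/2 := lt_of_le_of_lt hgapx hgapL
      linarith [hKx.2]
    · rw [hsplit]
      linarith [hKx.1]
  -- the limit
  rw [Metric.tendsto_nhds]
  intro ε₀ hε₀
  -- choose a curvature tolerance ε
  have hcm : ContinuousAt (fun t : ℝ => π / Real.sqrt (K - t)) 0 := by
    apply ContinuousAt.div continuousAt_const (by fun_prop)
    rw [sub_zero]
    positivity
  have hcp : ContinuousAt (fun t : ℝ => π / Real.sqrt (K + t)) 0 := by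
    apply ContinuousAt.div continuousAt_const (by fun_prop)
    rw [add_zero]
    positivity
  have hval : π / Real.sqrt K = π / Real.sqrt (K - 0) := by rw [sub_zero]
  have hval' : π / Real.sqrt K = π / Real.sqrt (K + 0) := by rw [add_zero]
  have hum : Tendsto (fun t : ℝ => π / Real.sqrt (K - t)) (nhds 0)
      (nhds (π / Real.sqrt K)) := by
    have := hcm.tendsto
    simpa using this
  have hup : Tendsto (fun t : ℝ => π / Real.sqrt (K + t)) (nhds 0)
      (nhds (π / Real.sqrt K)) := by
    have := hcp.tendsto
    simpa using this
  have h1 : ∀ᶠ t in nhds (0:ℝ), π / Real.sqrt (K - t) < π / Real.sqrt K + ε₀ :=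
    hum.eventually (eventually_lt_nhds (by linarith))
  have h2 : ∀ᶠ t in nhds (0:ℝ), π / Real.sqrt K - ε₀ < π / Real.sqrt (K + t) :=
    hup.eventually (eventually_gt_nhds (by linarith))
  have h3 : ∀ᶠ t in nhdsWithin (0:ℝ) (Ioi 0), t ∈ Ioo (0:ℝ) (K/2) := by
    have hm := Ioo_mem_nhdsGT_of_mem (c := (0:ℝ)) (a := K/2)
      ⟨le_refl 0, by positivity⟩
    filter_upwards [hm] with t ht
    exact ht
  obtain ⟨ε, hεmem, hεu, hεv⟩ :=
    (h3.and (((h1.and h2).filter_mono nhdsWithin_le_nhds))).exists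
  obtain ⟨hεpos, hεK⟩ := hεmem
  obtain ⟨δ, hδpos, hδrs, hevcurv⟩ := hδex ε hεpos
  filter_upwards [hevcurv, hev δ hδpos hδrs] with L hcurvL hrootsL
  obtain ⟨hL0, hLlt, hr1, hr2⟩ := hrootsL
  obtain ⟨h1pos, h12, he1, he2, _⟩ := hroots L hL0 hLlt
  have hsub : Ioo (r1 L) (r2 L) ⊆ Icc (rs-δ) (rs+δ) := fun x hx =>
    ⟨by linarith [hx.1], by linarith [hx.2]⟩
  have hbounds := period_bounds U E L (r1 L) (r2 L) (K - ε) (K + ε)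
    (hfc L) (hfd L) (hfd2 L) h1pos h12 (by linarith) (by linarith)
    (fun x hx => (hcurvL x (hsub hx)).1.le)
    (fun x hx => (hcurvL x (hsub hx)).2.le)
    he1 he2
  rw [Real.dist_eq, abs_sub_lt_iff]
  constructor
  · have := hbounds.2
    linarith [hεu, hεv]
  · have := hbounds.1
    linarith [hεu, hεv]
end
end
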